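/- Let H⁰, H¹, H² be finite-dimensional vector spaces arising from short exact sequences 0 → C¹(Wⁿ⁻¹) → Hⁿ → C⁰(Wⁿ) → 0 for n ≥ 0 (with W⁻¹ = 0), where for each finite-dimensional vector space W with commuting endomorphisms φ, ψ we set C⁰(W) = ker(1-φ) and C¹(W) = coker(1-φ), and ψ induces compatible maps everywhere. Then the alternating sum Σₙ (-1)ⁿ Tr(ψ | Hⁿ) = 0, provided only finitely many Wⁿ are nonzero. -/

import Mathlib

open LinearMap Module

section Aux

variable {K : Type*} [Field K]

lemma aux_trace_equiv {M N : Type*} [AddCommGroup M] [Module K M]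
    [FiniteDimensional K M] [AddCommGroup N] [Module K N] [FiniteDimensional K N]
    (e : M ≃ₗ[K] N) (fM : Module.End K M) (fN : Module.End K N)
    (h : ∀ x, e (fM x) = fN (e x)) :
    LinearMap.trace K M fM = LinearMap.trace K N fN := by
  rw [← LinearMap.trace_conj' fM e]
  congr 1
  ext y
  simp [LinearEquiv.conj_apply, h]

lemma aux_trace_split {V : Type*} [AddCommGroup V] [Module K V]
    [FiniteDimensional K V] (p : Submodule K V) (f : Module.End K V)
    (hf : ∀ x ∈ p, f x ∈ p) :
    LinearMap.trace K V f
      = LinearMap.trace K p (f.restrict hf)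
        + LinearMap.trace K (V ⧸ p) (p.mapQ p f (fun x hx => hf x hx)) := by
  classical
  obtain ⟨q, hq⟩ := Submodule.exists_isCompl p
  set e : (p × q) ≃ₗ[K] V := Submodule.prodEquivOfIsCompl p q hq with he
  set eq : (V ⧸ p) ≃ₗ[K] q := Submodule.quotientEquivOfIsCompl p q hq with heq
  let bp := Module.finBasis K p
  let bq := Module.finBasis K q
  let b : Basis _ K V := (bp.prod bq).map e
  let bq' : Basis _ K (V ⧸ p) := bq.map eq.symm
  have hrepr : ∀ (x : V) i, b.repr x i = (bp.prod bq).repr (e.symm x) i := fun x i => rfl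
  have hrepr' : ∀ (z : V ⧸ p) j, bq'.repr z j = bq.repr (eq z) j := fun z j => rfl
  have hfst : ∀ (y : V) (hy : y ∈ p), (e.symm y).1 = ⟨y, hy⟩ := by
    intro y hy
    have := Submodule.prodEquivOfIsCompl_symm_apply_left p q hq ⟨y, hy⟩
    rw [← he] at this
    exact congrArg Prod.fst this
  have hsnd : ∀ y : V, (e.symm y).2 = eq (Submodule.Quotient.mk y) := by
    intro y
    conv_rhs => rw [← e.apply_symm_apply y]
    rcases h' : e.symm y with ⟨a, c⟩
    have h1 : e (a, c) = ↑a + ↑c := Submodule.coe_prodEquivOfIsCompl' p q hq (a, c)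
    rw [h1]
    have h2 : (Submodule.Quotient.mk (↑a + ↑c : V) : V ⧸ p) = Submodule.Quotient.mk ↑c := by
      rw [Submodule.Quotient.mk_add]
      rw [(Submodule.Quotient.mk_eq_zero p).2 a.2, zero_add]
    rw [h2, heq, Submodule.quotientEquivOfIsCompl_apply_mk_coe]
  have hbl : ∀ j, b (Sum.inl j) = ↑(bp j) := by
    intro j
    have h1 : bp.prod bq (Sum.inl j) = (bp j, 0) :=
      Prod.ext (Basis.prod_apply_inl_fst _ _ _) (Basis.prod_apply_inl_snd _ _ _)
    rw [Basis.map_apply, h1]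
    rw [Submodule.coe_prodEquivOfIsCompl']
    simp
  have hbr : ∀ j, b (Sum.inr j) = ↑(bq j) := by
    intro j
    have h1 : bp.prod bq (Sum.inr j) = (0, bq j) :=
      Prod.ext (Basis.prod_apply_inr_fst _ _ _) (Basis.prod_apply_inr_snd _ _ _)
    rw [Basis.map_apply, h1]
    rw [Submodule.coe_prodEquivOfIsCompl']
    simp
  rw [LinearMap.trace_eq_matrix_trace K b f,
      LinearMap.trace_eq_matrix_trace K bp (f.restrict hf),
      LinearMap.trace_eq_matrix_trace K bq' (p.mapQ p f (fun x hx => hf x hx))]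
  rw [Matrix.trace, Matrix.trace, Matrix.trace]
  rw [Fintype.sum_sum_type]
  congr 1
  · apply Finset.sum_congr rfl
    intro j _
    rw [Matrix.diag_apply, Matrix.diag_apply, LinearMap.toMatrix_apply, LinearMap.toMatrix_apply]
    rw [hbl j, hrepr, Basis.prod_repr_inl]
    rw [hfst (f ↑(bp j)) (hf _ (bp j).2)]
    rfl
  · apply Finset.sum_congr rfl
    intro j _
    rw [Matrix.diag_apply, Matrix.diag_apply, LinearMap.toMatrix_apply, LinearMap.toMatrix_apply]
    rw [hbr j, hrepr, Basis.prod_repr_inr, hsnd, hrepr']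
    have hbq' : bq' j = Submodule.Quotient.mk (p := p) (↑(bq j) : V) := by
      rw [Basis.map_apply, heq]
      exact Submodule.quotientEquivOfIsCompl_symm_apply p q hq (bq j)
    rw [hbq', Submodule.mapQ_apply]

lemma aux_trace_ses {A H B : Type*} [AddCommGroup A] [Module K A]
    [FiniteDimensional K A] [AddCommGroup H] [Module K H] [FiniteDimensional K H]
    [AddCommGroup B] [Module K B] [FiniteDimensional K B]
    (i : A →ₗ[K] H) (pr : H →ₗ[K] B) (hi : Function.Injective i)
    (hex : Function.Exact i pr) (hpr : Function.Surjective pr)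
    (ψA : Module.End K A) (ψH : Module.End K H) (ψB : Module.End K B)
    (hA : ∀ x, ψH (i x) = i (ψA x)) (hB : ∀ x, pr (ψH x) = ψB (pr x)) :
    LinearMap.trace K H ψH = LinearMap.trace K A ψA + LinearMap.trace K B ψB := by
  set P := LinearMap.range i with hP
  have hPinv : ∀ x ∈ P, ψH x ∈ P := by
    rintro _ ⟨x, rfl⟩; exact ⟨ψA x, (hA x).symm⟩
  rw [aux_trace_split P ψH hPinv]
  congr 1
  · refine (aux_trace_equiv (LinearEquiv.ofInjective i hi) ψA (ψH.restrict hPinv) ?_).symm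
    intro x
    apply Subtype.ext
    show (i (ψA x) : H) = ψH ((LinearEquiv.ofInjective i hi x : P) : H)
    rw [LinearEquiv.ofInjective_apply, hA]
  · have hk : LinearMap.ker pr = P := hex.linearMap_ker_eq
    let e : (H ⧸ P) ≃ₗ[K] B :=
      (Submodule.quotEquivOfEq P (LinearMap.ker pr) hk.symm).trans
        (pr.quotKerEquivOfSurjective hpr)
    have hemk : ∀ y : H, e (Submodule.Quotient.mk y) = pr y := by
      intro y
      show (pr.quotKerEquivOfSurjective hpr)
        ((Submodule.quotEquivOfEq P (LinearMap.ker pr) hk.symm) (Submodule.Quotient.mk y)) = pr y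
      rw [Submodule.quotEquivOfEq_mk]
      rfl
    refine aux_trace_equiv e _ ψB ?_
    intro x
    obtain ⟨y, rfl⟩ := Submodule.Quotient.mk_surjective _ x
    rw [Submodule.mapQ_apply, hemk, hemk, hB]

lemma aux_ker_coker {V : Type*} [AddCommGroup V] [Module K V]
    [FiniteDimensional K V] (f ψ : Module.End K V) (hc : ψ * f = f * ψ)
    (hk : ∀ v ∈ LinearMap.ker f, ψ v ∈ LinearMap.ker f)
    (hr : LinearMap.range f ≤ (LinearMap.range f).comap ψ) :
    LinearMap.trace K (LinearMap.ker f) (ψ.restrict hk)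
      = LinearMap.trace K (V ⧸ LinearMap.range f)
          ((LinearMap.range f).mapQ (LinearMap.range f) ψ hr) := by
  have h1 := aux_trace_split (LinearMap.ker f) ψ hk
  have h2 := aux_trace_split (LinearMap.range f) ψ (fun x hx => hr hx)
  have h3 : LinearMap.trace K (V ⧸ LinearMap.ker f)
        ((LinearMap.ker f).mapQ (LinearMap.ker f) ψ (fun x hx => hk x hx))
      = LinearMap.trace K (LinearMap.range f) (ψ.restrict (fun x hx => hr hx)) := by
    refine aux_trace_equiv f.quotKerEquivRange _ _ ?_
    intro x
    obtain ⟨y, rfl⟩ := Submodule.Quotient.mk_surjective _ x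
    apply Subtype.ext
    rw [Submodule.mapQ_apply]
    show (f (ψ y) : V) = ψ (f.quotKerEquivRange (Submodule.Quotient.mk y) : V)
    rw [f.quotKerEquivRange_apply_mk]
    exact (DFunLike.congr_fun hc y).symm
  have h4 := h1.symm.trans h2
  rw [h3] at h4
  have h5 := h4.trans (add_comm _ _)
  exact add_right_cancel h5

end Aux
set_option maxHeartbeats 1000000 in
theorem stmt_16 {K : Type*} [Field K]
    (W H : ℕ → Type) [∀ n, AddCommGroup (W n)] [∀ n, Module K (W n)]
    [∀ n, FiniteDimensional K (W n)]
    [∀ n, AddCommGroup (H n)] [∀ n, Module K (H n)] [∀ n, FiniteDimensional K (H n)]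
    (φ ψ : ∀ n, Module.End K (W n)) (hcomm : ∀ n, ψ n * φ n = φ n * ψ n)
    (ψH : ∀ n, Module.End K (H n))
    (hker : ∀ n, ∀ v ∈ LinearMap.ker (1 - φ n), ψ n v ∈ LinearMap.ker (1 - φ n))
    (hrange : ∀ n, LinearMap.range (1 - φ n) ≤ (LinearMap.range (1 - φ n)).comap (ψ n))
    -- the short exact sequences 0 → C¹(Wⁿ) → H^{n+1} → C⁰(W^{n+1}) → 0 :
    (i : ∀ n, (W n ⧸ LinearMap.range (1 - φ n)) →ₗ[K] H (n + 1))
    (p : ∀ n, H (n + 1) →ₗ[K] LinearMap.ker (1 - φ (n + 1)))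
    (hi : ∀ n, Function.Injective (i n))
    (hexact : ∀ n, Function.Exact (i n) (p n))
    (hp : ∀ n, Function.Surjective (p n))
    -- the case n = 0 (with W⁻¹ = 0) : H⁰ ≅ C⁰(W⁰) :
    (e0 : H 0 ≃ₗ[K] LinearMap.ker (1 - φ 0))
    -- compatibility of all maps with ψ :
    (hcompat0 : ∀ v : H 0, e0 (ψH 0 v) = ((ψ 0).restrict (hker 0) :
        LinearMap.ker (1 - φ 0) →ₗ[K] LinearMap.ker (1 - φ 0)) (e0 v))
    (hcompati : ∀ n, (ψH (n + 1)) ∘ₗ (i n) =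
      (i n) ∘ₗ Submodule.mapQ (LinearMap.range (1 - φ n)) (LinearMap.range (1 - φ n)) (ψ n)
        (hrange n))
    (hcompatp : ∀ n, (p n) ∘ₗ (ψH (n + 1)) = ((ψ (n + 1)).restrict (hker (n + 1)) :
        LinearMap.ker (1 - φ (n + 1)) →ₗ[K] LinearMap.ker (1 - φ (n + 1))) ∘ₗ (p n))
    -- only finitely many Wⁿ (hence Hⁿ) are nonzero :
    (N : ℕ) (hvanW : ∀ n, N ≤ n → Subsingleton (W n)) (hvanH : ∀ n, N ≤ n → Subsingleton (H n)) :
    ∑ n ∈ Finset.range N, (-1 : K) ^ n * LinearMap.trace K (H n) (ψH n) = 0 := by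
  have hcomm' : ∀ n, ψ n * (1 - φ n) = (1 - φ n) * ψ n := by
    intro n
    rw [mul_sub, sub_mul, mul_one, one_mul, hcomm n]
  set k : ℕ → K := fun n => LinearMap.trace K _ ((ψ n).restrict (hker n)) with hkdef
  set c : ℕ → K := fun n =>
    LinearMap.trace K (W n ⧸ LinearMap.range (1 - φ n))
      (Submodule.mapQ (LinearMap.range (1 - φ n)) (LinearMap.range (1 - φ n)) (ψ n)
        (hrange n)) with hcdef
  have hkc : ∀ n, k n = c n := fun n =>
    aux_ker_coker (1 - φ n) (ψ n) (hcomm' n) (hker n) (hrange n)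
  have h0 : LinearMap.trace K (H 0) (ψH 0) = k 0 :=
    aux_trace_equiv e0 (ψH 0) ((ψ 0).restrict (hker 0)) hcompat0
  have hstep : ∀ n, LinearMap.trace K (H (n + 1)) (ψH (n + 1)) = c n + k (n + 1) := by
    intro n
    exact aux_trace_ses (i n) (p n) (hi n) (hexact n) (hp n) _ (ψH (n + 1)) _
      (fun x => LinearMap.congr_fun (hcompati n) x)
      (fun x => LinearMap.congr_fun (hcompatp n) x)
  have key : ∀ M, ∑ n ∈ Finset.range (M + 1),
      (-1 : K) ^ n * LinearMap.trace K (H n) (ψH n) = (-1) ^ M * c M := by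
    intro M
    induction M with
    | zero => simp [h0, hkc 0]
    | succ M ih =>
        rw [Finset.sum_range_succ, ih, hstep M, hkc (M + 1)]
        rw [pow_succ]
        ring
  cases N with
  | zero => simp
  | succ M =>
      rw [key M]
      haveI hH : Subsingleton (H (M + 1)) := hvanH (M + 1) le_rfl
      haveI hsub : Subsingleton (W M ⧸ LinearMap.range (1 - φ M)) :=
        ⟨fun a b => hi M (Subsingleton.elim _ _)⟩
      have hz : (Submodule.mapQ (LinearMap.range (1 - φ M)) (LinearMap.range (1 - φ M)) (ψ M)
          (hrange M)) = 0 := LinearMap.ext fun x => Subsingleton.elim _ _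
      have hcM : c M = 0 := by
        show LinearMap.trace K (W M ⧸ LinearMap.range (1 - φ M))
            (Submodule.mapQ (LinearMap.range (1 - φ M)) (LinearMap.range (1 - φ M)) (ψ M)
              (hrange M)) = 0
        rw [hz]
        exact map_zero _
      rw [hcM, mul_zero]
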